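/- For any polynomial g ∈ ℂ[s], the assignments p·x = x(s-1)g(s), q·x = 0, r·x = 0, s·x = s·x(s) for x = x(s) ∈ ℂ[s] define an H₄-module structure on ℂ[s] (denoted M_{(g,0)}). -/
import Mathlib


open Polynomial

/-- For any g ∈ ℂ[s], the assignments p·x = x(s-1)g(s), q·x = 0, r·x = 0,
s·x = s·x(s) define an H₄-module structure on ℂ[s], i.e. the corresponding
operators satisfy the defining bracket relations of H₄:
[p,q] = r, [s,p] = p, [s,q] = -q, [r,·] = 0. -/
theorem stmt2 (g : Polynomial ℂ) :
    ∀ (P Q R S : Module.End ℂ (Polynomial ℂ)),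
      (∀ x, P x = Polynomial.aeval (Polynomial.X - Polynomial.C 1 : Polynomial ℂ) x * g) →
      (∀ x, Q x = 0) →
      (∀ x, R x = 0) →
      (∀ x, S x = Polynomial.X * x) →
      (⁅P, Q⁆ = R ∧ ⁅S, P⁆ = P ∧ ⁅S, Q⁆ = -Q ∧
        ⁅R, P⁆ = 0 ∧ ⁅R, Q⁆ = 0 ∧ ⁅R, S⁆ = 0) := by
  intro P Q R S hP hQ hR hS
  refine ⟨?_, ?_, ?_, ?_, ?_, ?_⟩ <;> refine LinearMap.ext fun x => ?_ <;>
    simp only [Ring.lie_def, LinearMap.sub_apply, Module.End.mul_apply, hP, hQ, hR, hS,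
      map_mul, map_zero, aeval_X, LinearMap.neg_apply, LinearMap.zero_apply,
      Polynomial.C_1, one_mul, zero_mul, mul_zero, neg_zero, sub_zero, zero_sub, sub_self]

  ring
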